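/- Let φ, ψ ∈ F[X] be q-linearized polynomials of degree > 1 whose coefficients φ₀, ψ₀ of X satisfy ν(φ₀) = ν(ψ₀) = 0 (in particular φ₀, ψ₀ ≠ 0). Let f ∈ F[X] be a nonzero q-linearized polynomial such that f ∘ φ = ψ ∘ f. Then λ_ν(ψ) = V_f(λ_ν(φ)), where for a q-linearized h = Σ h_i X^{q^i} of degree > 1 with h₀ ≠ 0 one sets λ_ν(h) = −min{(ν(h_i) − ν(h₀))/(q^i − 1) : i ≥ 1, h_i ≠ 0}. -/

import Mathlib

open Polynomial

/-- A polynomial is `q`-linearized if it is of the form `Σ fᵢ X^(qⁱ)`. -/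
def IsqLin {F : Type*} [Field F] (q : ℕ) (f : Polynomial F) : Prop :=
  ∀ n, f.coeff n ≠ 0 → ∃ i : ℕ, n = q ^ i

/-- The valuation polygon `V_f(z) = min { ν(fᵢ) + qⁱ z : fᵢ ≠ 0 }` of a nonzero
`q`-linearized polynomial. -/
noncomputable def Vpoly {F : Type*} [Field F] (q : ℕ) (ν : F → ℚ) (f : Polynomial F)
    (z : ℝ) : ℝ :=
  sInf {y : ℝ | ∃ i : ℕ, f.coeff (q ^ i) ≠ 0 ∧
    y = (ν (f.coeff (q ^ i)) : ℝ) + (q : ℝ) ^ i * z}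

/-- `λ_ν(h) = − min { (ν(hᵢ) − ν(h₀))/(qⁱ − 1) : i ≥ 1, hᵢ ≠ 0 }`. -/
noncomputable def lamNu {F : Type*} [Field F] (q : ℕ) (ν : F → ℚ) (h : Polynomial F) : ℝ :=
  - sInf {y : ℝ | ∃ i : ℕ, 1 ≤ i ∧ h.coeff (q ^ i) ≠ 0 ∧
      y = ((ν (h.coeff (q ^ i)) : ℝ) - (ν (h.coeff 1) : ℝ)) / ((q : ℝ) ^ i - 1)}

set_option linter.unusedSectionVars false
set_option linter.unusedVariables false
set_option maxHeartbeats 1000000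
section Aux
section NuLemmas
variable {F : Type*} [Field F] {ν : F → ℚ}
  (hmul : ∀ x y : F, x ≠ 0 → y ≠ 0 → ν (x * y) = ν x + ν y)
  (hadd : ∀ x y : F, x ≠ 0 → y ≠ 0 → x + y ≠ 0 → min (ν x) (ν y) ≤ ν (x + y))

include hmul

lemma nu_one : ν 1 = 0 := by
  have := hmul 1 1 one_ne_zero one_ne_zero; simpa using this.symm

lemma nu_pow {x : F} (hx : x ≠ 0) (n : ℕ) : ν (x ^ n) = n * ν x := by
  induction n with
  | zero => simpa using nu_one hmul
  | succ n ih =>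
    rw [pow_succ, hmul _ _ (pow_ne_zero _ hx) hx, ih]
    push_cast; ring

lemma nu_neg {x : F} (hx : x ≠ 0) : ν (-x) = ν x := by
  have h1 : ν (-1 : F) = 0 := by
    have := hmul (-1 : F) (-1) (by norm_num) (by norm_num)
    simp only [neg_mul, one_mul, neg_neg] at this
    rw [nu_one hmul] at this; linarith
  calc ν (-x) = ν ((-1) * x) := by ring_nf
    _ = ν (-1) + ν x := hmul _ _ (by norm_num) hx
    _ = ν x := by rw [h1]; ring

include hadd

lemma nu_add_eq {x y : F} (hx : x ≠ 0) (hlt : ν x < ν y) : x + y ≠ 0 ∧ ν (x + y) = ν x := by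
  rcases eq_or_ne y 0 with rfl | hy
  · simpa using hx
  have hxy : x + y ≠ 0 := by
    intro h
    have hyx : y = -x := eq_neg_of_add_eq_zero_right h
    rw [hyx, nu_neg hmul hx] at hlt; exact lt_irrefl _ hlt
  refine ⟨hxy, le_antisymm ?_ ?_⟩
  · by_contra hgt
    push_neg at hgt
    have h2 : x = (x + y) + (-y) := by ring
    have h3 : min (ν (x+y)) (ν (-y)) ≤ ν ((x+y) + (-y)) :=
      hadd _ _ hxy (neg_ne_zero.2 hy) (by rw [← h2]; exact hx)
    rw [← h2, nu_neg hmul hy] at h3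
    exact absurd h3 (not_le.2 (lt_min hgt hlt))
  · have h4 := hadd x y hx hy hxy
    calc ν x = min (ν x) (ν y) := (min_eq_left hlt.le).symm
      _ ≤ ν (x + y) := h4

lemma nu_sum_lt {α : Type*} (s : Finset α) (g : α → F) (c : ℚ)
    (h : ∀ a ∈ s, g a ≠ 0 → c < ν (g a)) :
    (∑ a ∈ s, g a) = 0 ∨ ((∑ a ∈ s, g a) ≠ 0 ∧ c < ν (∑ a ∈ s, g a)) := by
  classical
  induction s using Finset.cons_induction with
  | empty => simp
  | cons a s ha ih =>
    rw [Finset.sum_cons]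
    have hs := ih (fun b hb hgb => h b (Finset.mem_cons_of_mem hb) hgb)
    rcases eq_or_ne (g a) 0 with hga | hga
    · rw [hga, zero_add]; exact hs
    have hca : c < ν (g a) := h a (Finset.mem_cons_self a s) hga
    rcases hs with hs0 | ⟨hsne, hs1⟩
    · rw [hs0, add_zero]; right; exact ⟨hga, hca⟩
    rcases eq_or_ne (g a + ∑ b ∈ s, g b) 0 with h0 | h0
    · exact Or.inl h0
    right
    refine ⟨h0, ?_⟩
    have := hadd (g a) (∑ b ∈ s, g b) hga hsne h0
    exact lt_of_lt_of_le (lt_min hca hs1) this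

lemma nu_sum_exists {α : Type*} (s : Finset α) (g : α → F)
    (hne : (∑ a ∈ s, g a) ≠ 0) :
    ∃ a ∈ s, g a ≠ 0 ∧ ν (g a) ≤ ν (∑ a ∈ s, g a) := by
  classical
  by_contra hcon
  push_neg at hcon
  rcases nu_sum_lt hmul hadd s g (ν (∑ a ∈ s, g a))
    (fun a ha hga => hcon a ha hga) with h0 | ⟨_, h1⟩
  · exact hne h0
  · exact lt_irrefl _ h1

lemma nu_sum_unique {α : Type*} (s : Finset α) (g : α → F) (a0 : α) (ha0 : a0 ∈ s)
    (hga0 : g a0 ≠ 0) (h : ∀ a ∈ s, a ≠ a0 → g a ≠ 0 → ν (g a0) < ν (g a)) :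
    (∑ a ∈ s, g a) ≠ 0 ∧ ν (∑ a ∈ s, g a) = ν (g a0) := by
  classical
  rw [← Finset.add_sum_erase s g ha0]
  rcases nu_sum_lt hmul hadd (s.erase a0) g (ν (g a0))
      (fun a ha hga => h a (Finset.mem_of_mem_erase ha) (Finset.ne_of_mem_erase ha) hga)
    with h0 | ⟨h0, hrest⟩
  · rw [h0, add_zero]; exact ⟨hga0, rfl⟩
  · exact nu_add_eq hmul hadd hga0 hrest

end NuLemmas

lemma pow_pcoeff {F : Type*} [Field F] {p : ℕ} [hp : Fact p.Prime] [CharP F p]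
    (h : F[X]) (e m : ℕ) :
    (h ^ p ^ e).coeff m = if p ^ e ∣ m then (h.coeff (m / p ^ e)) ^ p ^ e else 0 := by
  haveI : ExpChar F p := ExpChar.prime hp.out
  rw [← Polynomial.map_iterateFrobenius_expand (R := F) (p := p) h e, coeff_map, coeff_expand (pow_pos hp.out.pos e)]
  split_ifs with hd
  · simp [RingHom.coe_pow, iterate_frobenius, iterateFrobenius_def]
  · simp

lemma comp_coeff_sum {F : Type*} [Field F] (f g : F[X]) (m : ℕ) :
    (f.comp g).coeff m = ∑ n ∈ f.support, f.coeff n * (g ^ n).coeff m := by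
  rw [comp_eq_sum_left, Polynomial.sum, finset_sum_coeff]
  simp [coeff_C_mul]

-- char setup test
example {Fq F : Type*} [Field Fq] [Fintype Fq] [Field F] [Algebra Fq F] :
    ∃ p s : ℕ, p.Prime ∧ Fintype.card Fq = p ^ s ∧ 1 ≤ s ∧ CharP F p := by
  set p := ringChar Fq with hp
  haveI := Fact.mk (CharP.char_is_prime Fq p)
  obtain ⟨n, hpp, hcard⟩ := FiniteField.card Fq p
  have hinj : Function.Injective (algebraMap Fq F) := (algebraMap Fq F).injective
  haveI : CharP F p := charP_of_injective_ringHom hinj p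
  exact ⟨p, n, hpp, hcard, n.2, inferInstance⟩

section Idx
variable {F : Type*} [Field F] (q : ℕ) (ν : F → ℚ)

open scoped Classical in
noncomputable def qIdx (g : F[X]) : Finset ℕ :=
  (Finset.range (g.natDegree + 1)).filter fun i => g.coeff (q ^ i) ≠ 0

variable {q}

lemma idx_le (hq2 : 2 ≤ q) {g : F[X]} {i : ℕ} (hi : g.coeff (q ^ i) ≠ 0) :
    i ≤ g.natDegree := by
  have h1 : q ^ i ≤ g.natDegree := le_natDegree_of_ne_zero hi
  have h2 : i < q ^ i := Nat.lt_pow_self (by omega)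
  omega

lemma mem_qIdx (hq2 : 2 ≤ q) {g : F[X]} {i : ℕ} :
    i ∈ qIdx q g ↔ g.coeff (q ^ i) ≠ 0 := by
  simp only [qIdx, Finset.mem_filter, Finset.mem_range]
  exact ⟨fun h => h.2, fun h => ⟨Nat.lt_succ_of_le (idx_le hq2 h), h⟩⟩

lemma qIdx_nonempty (hq2 : 2 ≤ q) {g : F[X]} (hg0 : g ≠ 0) (hg : IsqLin q g) :
    ∃ i, g.coeff (q ^ i) ≠ 0 := by
  have h1 : g.coeff g.natDegree ≠ 0 := Polynomial.leadingCoeff_ne_zero.mpr hg0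
  obtain ⟨i, hi⟩ := hg _ h1
  exact ⟨i, by rw [← hi]; exact h1⟩

lemma support_eq (hq2 : 2 ≤ q) {g : F[X]} (hg : IsqLin q g) :
    g.support = (qIdx q g).image (q ^ ·) := by
  ext n
  simp only [Finset.mem_image, mem_support_iff]
  constructor
  · intro hn
    obtain ⟨i, rfl⟩ := hg n hn
    exact ⟨i, (mem_qIdx hq2).2 hn, rfl⟩
  · rintro ⟨i, hi, rfl⟩
    exact (mem_qIdx hq2).1 hi

-- Finset for Vpoly
lemma Vset_eq (hq2 : 2 ≤ q) (f : F[X]) (z : ℝ) :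
    {y : ℝ | ∃ i : ℕ, f.coeff (q ^ i) ≠ 0 ∧
      y = (ν (f.coeff (q ^ i)) : ℝ) + (q : ℝ) ^ i * z} =
    ↑((qIdx q f).image fun i => (ν (f.coeff (q ^ i)) : ℝ) + (q : ℝ) ^ i * z) := by
  ext y
  simp only [Set.mem_setOf_eq, Finset.coe_image, Set.mem_image, Finset.mem_coe]
  constructor
  · rintro ⟨i, hi, rfl⟩; exact ⟨i, (mem_qIdx hq2).2 hi, rfl⟩
  · rintro ⟨i, hi, rfl⟩; exact ⟨i, (mem_qIdx hq2).1 hi, rfl⟩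

lemma Vpoly_le (hq2 : 2 ≤ q) {f : F[X]} {i : ℕ} (hi : f.coeff (q ^ i) ≠ 0) (z : ℝ) :
    Vpoly q ν f z ≤ (ν (f.coeff (q ^ i)) : ℝ) + (q : ℝ) ^ i * z := by
  rw [Vpoly, Vset_eq ν hq2]
  have hne : ((qIdx q f).image fun i => (ν (f.coeff (q ^ i)) : ℝ) + (q : ℝ) ^ i * z).Nonempty :=
    ⟨_, Finset.mem_image_of_mem _ ((mem_qIdx hq2).2 hi)⟩
  rw [hne.csInf_eq_min']
  exact Finset.min'_le _ _ (Finset.mem_image_of_mem _ ((mem_qIdx hq2).2 hi))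

lemma Vpoly_mem (hq2 : 2 ≤ q) {f : F[X]} (hf0 : f ≠ 0) (hf : IsqLin q f) (z : ℝ) :
    ∃ i, f.coeff (q ^ i) ≠ 0 ∧ Vpoly q ν f z = (ν (f.coeff (q ^ i)) : ℝ) + (q : ℝ) ^ i * z := by
  obtain ⟨i0, hi0⟩ := qIdx_nonempty hq2 hf0 hf
  rw [Vpoly, Vset_eq ν hq2]
  have hne : ((qIdx q f).image fun i => (ν (f.coeff (q ^ i)) : ℝ) + (q : ℝ) ^ i * z).Nonempty :=
    ⟨_, Finset.mem_image_of_mem _ ((mem_qIdx hq2).2 hi0)⟩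
  rw [hne.csInf_eq_min']
  have := Finset.min'_mem _ hne
  rw [Finset.mem_image] at this
  obtain ⟨i, hi, hival⟩ := this
  exact ⟨i, (mem_qIdx hq2).1 hi, hival.symm⟩

end Idx
lemma qpow_pos {q : ℕ} (hq2 : 2 ≤ q) {i : ℕ} (hi : 1 ≤ i) : (0:ℝ) < (q:ℝ) ^ i - 1 := by
  have h1 : (2:ℝ) ≤ (q:ℝ) := by exact_mod_cast hq2
  have h2 : (2:ℝ) ≤ (q:ℝ) ^ i := by
    calc (2:ℝ) = (q:ℝ) ^ 0 * 2 := by norm_num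
    _ ≤ (q:ℝ) ^ i := by
      rcases Nat.exists_eq_add_of_le hi with ⟨j, rfl⟩
      rw [pow_add, pow_one, pow_zero, one_mul]
      have : (1:ℝ) ≤ (q:ℝ) ^ j := one_le_pow₀ (by linarith)
      nlinarith
  linarith
section LamChar
variable {F : Type*} [Field F] {q : ℕ} {ν : F → ℚ}

lemma Lset_eq (hq2 : 2 ≤ q) (h : F[X]) :
    {y : ℝ | ∃ i : ℕ, 1 ≤ i ∧ h.coeff (q ^ i) ≠ 0 ∧
      y = ((ν (h.coeff (q ^ i)) : ℝ) - (ν (h.coeff 1) : ℝ)) / ((q : ℝ) ^ i - 1)} =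
    ↑(((qIdx q h).filter (1 ≤ ·)).image fun i =>
      ((ν (h.coeff (q ^ i)) : ℝ) - (ν (h.coeff 1) : ℝ)) / ((q : ℝ) ^ i - 1)) := by
  ext y
  simp only [Set.mem_setOf_eq, Finset.coe_image, Set.mem_image, Finset.mem_coe,
    Finset.mem_filter]
  constructor
  · rintro ⟨i, hi1, hi, rfl⟩; exact ⟨i, ⟨(mem_qIdx hq2).2 hi, hi1⟩, rfl⟩
  · rintro ⟨i, ⟨hi, hi1⟩, rfl⟩; exact ⟨i, hi1, (mem_qIdx hq2).1 hi, rfl⟩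

lemma Lfin_nonempty (hq2 : 2 ≤ q) {h : F[X]} (hqlin : IsqLin q h) (hd : 1 < h.natDegree) :
    ∃ i, 1 ≤ i ∧ h.coeff (q ^ i) ≠ 0 := by
  have h0 : h ≠ 0 := fun hz => by simp [hz] at hd
  have h1 : h.coeff h.natDegree ≠ 0 := Polynomial.leadingCoeff_ne_zero.mpr h0
  obtain ⟨i, hi⟩ := hqlin _ h1
  refine ⟨i, ?_, by rw [← hi]; exact h1⟩
  rcases Nat.eq_zero_or_pos i with rfl | hpos
  · simp at hi; omega
  · exact hpos

lemma lamNu_le (hq2 : 2 ≤ q) {h : F[X]} (hν0 : ν (h.coeff 1) = 0) {i : ℕ} (hi1 : 1 ≤ i)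
    (hi : h.coeff (q ^ i) ≠ 0) :
    lamNu q ν h ≤ (ν (h.coeff (q ^ i)) : ℝ) + (q : ℝ) ^ i * lamNu q ν h := by
  set L := lamNu q ν h with hL
  have hSle : sInf {y : ℝ | ∃ i : ℕ, 1 ≤ i ∧ h.coeff (q ^ i) ≠ 0 ∧
      y = ((ν (h.coeff (q ^ i)) : ℝ) - (ν (h.coeff 1) : ℝ)) / ((q : ℝ) ^ i - 1)}
      ≤ ((ν (h.coeff (q ^ i)) : ℝ) - (ν (h.coeff 1) : ℝ)) / ((q : ℝ) ^ i - 1) := by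
    rw [Lset_eq hq2]
    have hmem : i ∈ (qIdx q h).filter (1 ≤ ·) :=
      Finset.mem_filter.2 ⟨(mem_qIdx hq2).2 hi, hi1⟩
    have hne : (((qIdx q h).filter (1 ≤ ·)).image fun i =>
        ((ν (h.coeff (q ^ i)) : ℝ) - (ν (h.coeff 1) : ℝ)) / ((q : ℝ) ^ i - 1)).Nonempty :=
      ⟨_, Finset.mem_image_of_mem _ hmem⟩
    rw [hne.csInf_eq_min']
    exact Finset.min'_le _ _ (Finset.mem_image_of_mem _ hmem)
  have hLeq : -L ≤ ((ν (h.coeff (q ^ i)) : ℝ) - (ν (h.coeff 1) : ℝ)) / ((q : ℝ) ^ i - 1) := by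
    rw [hL, lamNu, neg_neg]; exact hSle
  rw [hν0] at hLeq
  push_cast at hLeq
  rw [sub_zero, le_div_iff₀ (qpow_pos hq2 hi1)] at hLeq
  nlinarith [qpow_pos hq2 hi1]

lemma lamNu_mem (hq2 : 2 ≤ q) {h : F[X]} (hqlin : IsqLin q h) (hd : 1 < h.natDegree)
    (hν0 : ν (h.coeff 1) = 0) :
    ∃ i, 1 ≤ i ∧ h.coeff (q ^ i) ≠ 0 ∧
      (ν (h.coeff (q ^ i)) : ℝ) + (q : ℝ) ^ i * lamNu q ν h = lamNu q ν h := by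
  obtain ⟨i0, hi01, hi0⟩ := Lfin_nonempty hq2 hqlin hd
  have hmem0 : i0 ∈ (qIdx q h).filter (1 ≤ ·) :=
    Finset.mem_filter.2 ⟨(mem_qIdx hq2).2 hi0, hi01⟩
  have hne : (((qIdx q h).filter (1 ≤ ·)).image fun i =>
      ((ν (h.coeff (q ^ i)) : ℝ) - (ν (h.coeff 1) : ℝ)) / ((q : ℝ) ^ i - 1)).Nonempty :=
    ⟨_, Finset.mem_image_of_mem _ hmem0⟩
  have hS : sInf {y : ℝ | ∃ i : ℕ, 1 ≤ i ∧ h.coeff (q ^ i) ≠ 0 ∧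
      y = ((ν (h.coeff (q ^ i)) : ℝ) - (ν (h.coeff 1) : ℝ)) / ((q : ℝ) ^ i - 1)} ∈
      (((qIdx q h).filter (1 ≤ ·)).image fun i =>
      ((ν (h.coeff (q ^ i)) : ℝ) - (ν (h.coeff 1) : ℝ)) / ((q : ℝ) ^ i - 1)) := by
    rw [Lset_eq hq2, hne.csInf_eq_min']
    exact Finset.min'_mem _ hne
  rw [Finset.mem_image] at hS
  obtain ⟨i, hi, hival⟩ := hS
  rw [Finset.mem_filter] at hi
  refine ⟨i, hi.2, (mem_qIdx hq2).1 hi.1, ?_⟩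
  have hL : lamNu q ν h = -(((ν (h.coeff (q ^ i)) : ℝ) - (ν (h.coeff 1) : ℝ)) / ((q : ℝ) ^ i - 1)) := by
    rw [lamNu, hival]
  rw [hν0] at hL
  push_cast at hL
  rw [sub_zero] at hL
  have hpos := qpow_pos hq2 hi.2
  rw [hL]
  field_simp
  ring
end LamChar
section More
variable {F : Type*} [Field F] {q : ℕ} {ν : F → ℚ}

lemma lamNu_eq (hq2 : 2 ≤ q) {h : F[X]} (hν0 : ν (h.coeff 1) = 0) (μ : ℝ)
    (G1 : ∀ i, 1 ≤ i → h.coeff (q ^ i) ≠ 0 → μ ≤ (ν (h.coeff (q ^ i)) : ℝ) + (q : ℝ) ^ i * μ)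
    (G2 : ∃ i, 1 ≤ i ∧ h.coeff (q ^ i) ≠ 0 ∧ (ν (h.coeff (q ^ i)) : ℝ) + (q : ℝ) ^ i * μ ≤ μ) :
    lamNu q ν h = μ := by
  have hkey : sInf {y : ℝ | ∃ i : ℕ, 1 ≤ i ∧ h.coeff (q ^ i) ≠ 0 ∧
      y = ((ν (h.coeff (q ^ i)) : ℝ) - (ν (h.coeff 1) : ℝ)) / ((q : ℝ) ^ i - 1)} = -μ := by
    rw [Lset_eq hq2]
    obtain ⟨i0, hi01, hi0, hi0le⟩ := G2
    have hmem0 : i0 ∈ (qIdx q h).filter (1 ≤ ·) :=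
      Finset.mem_filter.2 ⟨(mem_qIdx hq2).2 hi0, hi01⟩
    have hne : (((qIdx q h).filter (1 ≤ ·)).image fun i =>
        ((ν (h.coeff (q ^ i)) : ℝ) - (ν (h.coeff 1) : ℝ)) / ((q : ℝ) ^ i - 1)).Nonempty :=
      ⟨_, Finset.mem_image_of_mem _ hmem0⟩
    rw [hne.csInf_eq_min']
    apply le_antisymm
    · refine le_trans (Finset.min'_le _ _ (Finset.mem_image_of_mem _ hmem0)) ?_
      rw [hν0]; push_cast; rw [sub_zero, div_le_iff₀ (qpow_pos hq2 hi01)]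
      nlinarith [qpow_pos hq2 hi01]
    · apply Finset.le_min'
      intro y hy
      rw [Finset.mem_image] at hy
      obtain ⟨i, hi, rfl⟩ := hy
      rw [Finset.mem_filter] at hi
      have h1 := G1 i hi.2 ((mem_qIdx hq2).1 hi.1)
      rw [hν0]; push_cast; rw [sub_zero, le_div_iff₀ (qpow_pos hq2 hi.2)]
      nlinarith [qpow_pos hq2 hi.2]
  rw [lamNu, hkey, neg_neg]

lemma Vpoly_strictMono (hq2 : 2 ≤ q) {f : F[X]} (hf0 : f ≠ 0) (hf : IsqLin q f)
    {z z' : ℝ} (h : z < z') : Vpoly q ν f z < Vpoly q ν f z' := by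
  obtain ⟨i, hi, hival⟩ := Vpoly_mem ν hq2 hf0 hf z'
  calc Vpoly q ν f z ≤ (ν (f.coeff (q ^ i)) : ℝ) + (q : ℝ) ^ i * z := Vpoly_le ν hq2 hi z
    _ < (ν (f.coeff (q ^ i)) : ℝ) + (q : ℝ) ^ i * z' := by
        have : (0:ℝ) < (q:ℝ) ^ i := by positivity
        nlinarith
    _ = Vpoly q ν f z' := hival.symm

lemma Vpoly_lip (hq2 : 2 ≤ q) {f : F[X]} (hf0 : f ≠ 0) (hf : IsqLin q f)
    {z z' : ℝ} (h : z ≤ z') :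
    Vpoly q ν f z' ≤ Vpoly q ν f z + (q : ℝ) ^ f.natDegree * (z' - z) := by
  obtain ⟨i, hi, hival⟩ := Vpoly_mem ν hq2 hf0 hf z
  have hiD : i ≤ f.natDegree := idx_le hq2 hi
  have hqD : (q : ℝ) ^ i ≤ (q : ℝ) ^ f.natDegree :=
    pow_le_pow_right₀ (by exact_mod_cast hq2.trans' (by norm_num)) hiD
  calc Vpoly q ν f z' ≤ (ν (f.coeff (q ^ i)) : ℝ) + (q : ℝ) ^ i * z' := Vpoly_le ν hq2 hi z'
    _ = ((ν (f.coeff (q ^ i)) : ℝ) + (q : ℝ) ^ i * z) + (q : ℝ) ^ i * (z' - z) := by ring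
    _ ≤ Vpoly q ν f z + (q : ℝ) ^ f.natDegree * (z' - z) := by
        rw [← hival]; nlinarith

end More
section Comp
variable {F : Type*} [Field F] {q : ℕ}

lemma pow_qcoeff {p s : ℕ} [hp : Fact p.Prime] [CharP F p] (hq : q = p ^ s) (hq2 : 2 ≤ q)
    (g : F[X]) (i n : ℕ) :
    (g ^ q ^ i).coeff (q ^ n) = if i ≤ n then (g.coeff (q ^ (n - i))) ^ q ^ i else 0 := by
  have hs1 : 1 ≤ s := by
    rcases Nat.eq_zero_or_pos s with rfl | h
    · rw [pow_zero] at hq; omega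
    · exact h
  have hp1 : 1 < p := hp.out.one_lt
  have e1 : q ^ i = p ^ (s * i) := by rw [hq, ← pow_mul]
  have e2 : q ^ n = p ^ (s * n) := by rw [hq, ← pow_mul]
  have e3 : q ^ (n - i) = p ^ (s * (n - i)) := by rw [hq, ← pow_mul]
  rw [e1, e2, e3, pow_pcoeff]
  have hdvd : p ^ (s * i) ∣ p ^ (s * n) ↔ i ≤ n := by
    rw [Nat.pow_dvd_pow_iff_le_right hp1]
    constructor
    · intro h
      by_contra hc; push_neg at hc
      have h2 : s * n < s * i := Nat.mul_lt_mul_of_le_of_lt (le_refl s) hc (by omega)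
      omega
    · intro h; exact Nat.mul_le_mul_left s h
  split_ifs with hc hc2 hc2
  · have hle : s * i ≤ s * n := Nat.mul_le_mul_left s (hdvd.1 hc)
    rw [Nat.pow_div hle (by omega), Nat.mul_sub s n i]
  · exact absurd (hdvd.1 hc) hc2
  · exact absurd (hdvd.2 hc2) hc
  · rfl

lemma comp_coeff_q {p s : ℕ} [hp : Fact p.Prime] [CharP F p] (hq : q = p ^ s) (hq2 : 2 ≤ q)
    {f : F[X]} (hf : IsqLin q f) (g : F[X]) (n : ℕ) :
    (f.comp g).coeff (q ^ n) =
      ∑ i ∈ qIdx q f,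
        (if i ≤ n then f.coeff (q ^ i) * (g.coeff (q ^ (n - i))) ^ q ^ i else 0) := by
  rw [comp_coeff_sum, support_eq hq2 hf,
    Finset.sum_image (fun a _ b _ h => Nat.pow_right_injective hq2 h)]
  apply Finset.sum_congr rfl
  intro i hi
  rw [pow_qcoeff hq hq2]
  split_ifs <;> simp

end Comp
section Steps
variable {F : Type*} [Field F] {q : ℕ} {ν : F → ℚ}

lemma philine (hq2 : 2 ≤ q) {φ : F[X]} (hνφ : ν (φ.coeff 1) = 0)
    {j : ℕ} (hj : φ.coeff (q ^ j) ≠ 0) {z : ℝ} (hz : lamNu q ν φ ≤ z) :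
    z ≤ (ν (φ.coeff (q ^ j)) : ℝ) + (q : ℝ) ^ j * z := by
  rcases Nat.eq_zero_or_pos j with rfl | hj1
  · simp only [pow_zero, one_mul]
    rw [hνφ]
    norm_num
  · have h1 := lamNu_le hq2 hνφ hj1 hj
    have h2 := qpow_pos hq2 hj1
    nlinarith

lemma term_ne_zero (hq2 : 2 ≤ q) {n1 k : ℕ} {G : ℕ → F} {a b : F}
    (hG : G k = if k ≤ n1 then a * b ^ q ^ k else 0) (h : G k ≠ 0) :
    k ≤ n1 ∧ a ≠ 0 ∧ b ≠ 0 := by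
  rcases le_or_gt k n1 with hk | hk
  · rw [hG, if_pos hk] at h
    rcases mul_ne_zero_iff.1 h with ⟨ha, hb⟩
    refine ⟨hk, ha, fun hb0 => hb ?_⟩
    rw [hb0]
    exact zero_pow (Nat.pow_pos (n := k) (by omega : 0 < q)).ne'
  · rw [hG, if_neg (by omega)] at h; exact absurd rfl h

lemma stepA
    (hmul : ∀ x y : F, x ≠ 0 → y ≠ 0 → ν (x * y) = ν x + ν y)
    (hadd : ∀ x y : F, x ≠ 0 → y ≠ 0 → x + y ≠ 0 → min (ν x) (ν y) ≤ ν (x + y))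
    {p s : ℕ} [Fact p.Prime] [CharP F p] (hqps : q = p ^ s) (hq2 : 2 ≤ q)
    {φ ψ f : F[X]} (hφ : IsqLin q φ) (hψ : IsqLin q ψ) (hf : IsqLin q f)
    (hψ0 : ψ.coeff 1 ≠ 0) (hf0 : f ≠ 0)
    (hνφ : ν (φ.coeff 1) = 0)
    (hcomm : f.comp φ = ψ.comp f)
    {z : ℝ} (hz : lamNu q ν φ ≤ z)
    (P3 : ∀ k k', k ≠ k' → ψ.coeff (q ^ k) ≠ 0 → ψ.coeff (q ^ k') ≠ 0 →
      (ν (ψ.coeff (q ^ k)) : ℝ) + (q:ℝ) ^ k * Vpoly q ν f z ≠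
      (ν (ψ.coeff (q ^ k')) : ℝ) + (q:ℝ) ^ k' * Vpoly q ν f z) :
    ∀ k, ψ.coeff (q ^ k) ≠ 0 →
      Vpoly q ν f z ≤ (ν (ψ.coeff (q ^ k)) : ℝ) + (q:ℝ) ^ k * Vpoly q ν f z := by
  classical
  set w := Vpoly q ν f z with hw
  have hψne : ψ ≠ 0 := fun h => hψ0 (by simp [h])
  -- argmin of f at z
  obtain ⟨i0, hi0ne, hi0val⟩ := Vpoly_mem ν hq2 hf0 hf z
  -- argmin of ψ at w
  obtain ⟨k0, hk0ne, hk0val⟩ := Vpoly_mem ν hq2 hψne hψ w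
  set n1 := k0 + i0 with hn1
  set G : ℕ → F := fun k => if k ≤ n1 then ψ.coeff (q ^ k) * (f.coeff (q ^ (n1 - k))) ^ q ^ k else 0
    with hGdef
  have hRHS : (ψ.comp f).coeff (q ^ n1) = ∑ k ∈ qIdx q ψ, G k := comp_coeff_q hqps hq2 hψ f n1
  have hGk0 : G k0 = ψ.coeff (q ^ k0) * (f.coeff (q ^ i0)) ^ q ^ k0 := by
    have hsub : n1 - k0 = i0 := by omega
    rw [hGdef]; simp only []
    rw [if_pos (show k0 ≤ n1 by omega), hsub]
  have hGk0ne : G k0 ≠ 0 := by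
    rw [hGk0]; exact mul_ne_zero hk0ne (pow_ne_zero _ hi0ne)
  have hGk0val : ν (G k0) = ν (ψ.coeff (q ^ k0)) + (q ^ k0 : ℕ) * ν (f.coeff (q ^ i0)) := by
    rw [hGk0, hmul _ _ hk0ne (pow_ne_zero _ hi0ne), nu_pow hmul hi0ne]
  -- the real-valued identity for the k0 term
  have hA : ((ν (ψ.coeff (q ^ k0)) : ℝ) + (q:ℝ) ^ k0 * (ν (f.coeff (q ^ i0)) : ℝ))
      + (q:ℝ) ^ n1 * z = (ν (ψ.coeff (q ^ k0)) : ℝ) + (q:ℝ) ^ k0 * w := by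
    rw [hw, hi0val, hn1]
    rw [pow_add]
    ring
  -- strict minimality of the k0 term on the RHS
  have hstrict : ∀ k ∈ qIdx q ψ, k ≠ k0 → G k ≠ 0 → ν (G k0) < ν (G k) := by
    intro k hkmem hkne hGkne
    obtain ⟨hkle, hψk, hfl⟩ := term_ne_zero hq2 (by rw [hGdef]) hGkne
    set l := n1 - k with hl
    have hkl : k + l = n1 := by omega
    have hGkval : ν (G k) = ν (ψ.coeff (q ^ k)) + (q ^ k : ℕ) * ν (f.coeff (q ^ l)) := by
      rw [hGdef]; simp only []
      rw [if_pos hkle, hmul _ _ hψk (pow_ne_zero _ hfl), nu_pow hmul hfl]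
    rw [hGk0val, hGkval]
    have hreal : ((ν (ψ.coeff (q ^ k0)) : ℝ) + (q:ℝ) ^ k0 * (ν (f.coeff (q ^ i0)) : ℝ))
        < (ν (ψ.coeff (q ^ k)) : ℝ) + (q:ℝ) ^ k * (ν (f.coeff (q ^ l)) : ℝ) := by
      have hB : ((ν (ψ.coeff (q ^ k)) : ℝ) + (q:ℝ) ^ k * (ν (f.coeff (q ^ l)) : ℝ))
          + (q:ℝ) ^ n1 * z
          = (ν (ψ.coeff (q ^ k)) : ℝ) + (q:ℝ) ^ k * ((ν (f.coeff (q ^ l)) : ℝ) + (q:ℝ) ^ l * z) := by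
        rw [← hkl]
        rw [pow_add]
        ring
      have h1 : w ≤ (ν (f.coeff (q ^ l)) : ℝ) + (q:ℝ) ^ l * z := Vpoly_le ν hq2 hfl z
      have h2 : (ν (ψ.coeff (q ^ k0)) : ℝ) + (q:ℝ) ^ k0 * w
          < (ν (ψ.coeff (q ^ k)) : ℝ) + (q:ℝ) ^ k * w := by
        have hle : (ν (ψ.coeff (q ^ k0)) : ℝ) + (q:ℝ) ^ k0 * w
            ≤ (ν (ψ.coeff (q ^ k)) : ℝ) + (q:ℝ) ^ k * w := by
          rw [← hk0val]; exact Vpoly_le ν hq2 hψk w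
        exact lt_of_le_of_ne hle (P3 k0 k (fun h => hkne h.symm) hk0ne hψk)
      have hq0 : (0:ℝ) < (q:ℝ) ^ k := by positivity
      nlinarith [hA, hB, mul_le_mul_of_nonneg_left h1 hq0.le]
    exact_mod_cast hreal
  have hsum := nu_sum_unique hmul hadd (qIdx q ψ) G k0 ((mem_qIdx hq2).2 hk0ne) hGk0ne hstrict
  -- transfer to composition coefficient
  have hcne : (f.comp φ).coeff (q ^ n1) ≠ 0 := by rw [hcomm, hRHS]; exact hsum.1
  have hcval : ν ((f.comp φ).coeff (q ^ n1)) =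
      ν (ψ.coeff (q ^ k0)) + (q ^ k0 : ℕ) * ν (f.coeff (q ^ i0)) := by
    rw [hcomm, hRHS, hsum.2, hGk0val]
  -- LHS lower bound
  set H : ℕ → F := fun i => if i ≤ n1 then f.coeff (q ^ i) * (φ.coeff (q ^ (n1 - i))) ^ q ^ i else 0
    with hHdef
  have hLHS : (f.comp φ).coeff (q ^ n1) = ∑ i ∈ qIdx q f, H i := comp_coeff_q hqps hq2 hf φ n1
  have hsumne : (∑ i ∈ qIdx q f, H i) ≠ 0 := by rw [← hLHS]; exact hcne
  obtain ⟨i, himem, hHine, hHile⟩ := nu_sum_exists hmul hadd (qIdx q f) H hsumne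
  obtain ⟨hile, hfi, hφj⟩ := term_ne_zero hq2 (by rw [hHdef]) hHine
  set j := n1 - i with hjdef
  have hij : i + j = n1 := by omega
  have hHival : ν (H i) = ν (f.coeff (q ^ i)) + (q ^ i : ℕ) * ν (φ.coeff (q ^ j)) := by
    rw [hHdef]; simp only []
    rw [if_pos hile, hmul _ _ hfi (pow_ne_zero _ hφj), nu_pow hmul hφj]
  -- key: ν c + q^n1 z ≥ w
  have hkey : w ≤ (ν (ψ.coeff (q ^ k0)) : ℝ) + (q:ℝ) ^ k0 * w := by
    have hHreal : ((ν (f.coeff (q ^ i)) : ℝ) + (q:ℝ) ^ i * (ν (φ.coeff (q ^ j)) : ℝ))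
        + (q:ℝ) ^ n1 * z
        = (ν (f.coeff (q ^ i)) : ℝ) + (q:ℝ) ^ i * ((ν (φ.coeff (q ^ j)) : ℝ) + (q:ℝ) ^ j * z) := by
      rw [← hij]; rw [pow_add]; ring
    have h1 : z ≤ (ν (φ.coeff (q ^ j)) : ℝ) + (q:ℝ) ^ j * z := philine hq2 hνφ hφj hz
    have h2 : w ≤ (ν (f.coeff (q ^ i)) : ℝ) + (q:ℝ) ^ i * z := Vpoly_le ν hq2 hfi z
    have h3q : ν (H i) ≤ ν (ψ.coeff (q ^ k0)) + (q ^ k0 : ℕ) * ν (f.coeff (q ^ i0)) := by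
      rw [← hcval, hLHS]; exact hHile
    have h3 : (ν (H i) : ℝ) ≤ (ν (ψ.coeff (q ^ k0)) : ℝ) + (q:ℝ) ^ k0 * (ν (f.coeff (q ^ i0)) : ℝ) := by
      exact_mod_cast h3q
    have h4 : (0:ℝ) < (q:ℝ) ^ i := by positivity
    have h5 : (ν (H i) : ℝ) = (ν (f.coeff (q ^ i)) : ℝ) + (q:ℝ) ^ i * (ν (φ.coeff (q ^ j)) : ℝ) := by
      exact_mod_cast hHival
    nlinarith [hA, hHreal, mul_le_mul_of_nonneg_left h1 h4.le]
  intro k hk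
  calc w ≤ (ν (ψ.coeff (q ^ k0)) : ℝ) + (q:ℝ) ^ k0 * w := hkey
    _ ≤ (ν (ψ.coeff (q ^ k)) : ℝ) + (q:ℝ) ^ k * w := by
        rw [← hk0val]; exact Vpoly_le ν hq2 hk w

end Steps
section StepB
variable {F : Type*} [Field F] {q : ℕ} {ν : F → ℚ}

lemma stepB
    (hmul : ∀ x y : F, x ≠ 0 → y ≠ 0 → ν (x * y) = ν x + ν y)
    (hadd : ∀ x y : F, x ≠ 0 → y ≠ 0 → x + y ≠ 0 → min (ν x) (ν y) ≤ ν (x + y))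
    {p s : ℕ} [Fact p.Prime] [CharP F p] (hqps : q = p ^ s) (hq2 : 2 ≤ q)
    {φ ψ f : F[X]} (hφ : IsqLin q φ) (hψ : IsqLin q ψ) (hf : IsqLin q f)
    (hφ0 : φ.coeff 1 ≠ 0) (hf0 : f ≠ 0) (hdφ : 1 < φ.natDegree)
    (hνφ : ν (φ.coeff 1) = 0) (hνψ : ν (ψ.coeff 1) = 0)
    (hcomm : f.comp φ = ψ.comp f)
    {z : ℝ} (hz : z < lamNu q ν φ)
    (P4 : ∀ j j', j ≠ j' → φ.coeff (q ^ j) ≠ 0 → φ.coeff (q ^ j') ≠ 0 →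
      (ν (φ.coeff (q ^ j)) : ℝ) + (q:ℝ) ^ j * z ≠ (ν (φ.coeff (q ^ j')) : ℝ) + (q:ℝ) ^ j' * z) :
    ∃ k, 1 ≤ k ∧ ψ.coeff (q ^ k) ≠ 0 ∧
      (ν (ψ.coeff (q ^ k)) : ℝ) + (q:ℝ) ^ k * Vpoly q ν f z < Vpoly q ν f z := by
  classical
  have hφne : φ ≠ 0 := fun h => hφ0 (by simp [h])
  set w := Vpoly q ν f z with hw
  set w' := Vpoly q ν φ z with hw'
  -- w' < z
  obtain ⟨js, hjs1, hjsne, hjseq⟩ := lamNu_mem hq2 hφ hdφ hνφ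
  have hw'lt : w' < z := by
    have h1 : w' ≤ (ν (φ.coeff (q ^ js)) : ℝ) + (q:ℝ) ^ js * z := Vpoly_le ν hq2 hjsne z
    have h2 := qpow_pos hq2 hjs1
    nlinarith
  obtain ⟨j0, hj0ne, hj0val⟩ := Vpoly_mem ν hq2 hφne hφ z
  obtain ⟨i1, hi1ne, hi1val⟩ := Vpoly_mem ν hq2 hf0 hf w'
  set n2 := i1 + j0 with hn2
  set H : ℕ → F := fun i => if i ≤ n2 then f.coeff (q ^ i) * (φ.coeff (q ^ (n2 - i))) ^ q ^ i else 0
    with hHdef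
  have hLHS : (f.comp φ).coeff (q ^ n2) = ∑ i ∈ qIdx q f, H i := comp_coeff_q hqps hq2 hf φ n2
  have hHi1 : H i1 = f.coeff (q ^ i1) * (φ.coeff (q ^ j0)) ^ q ^ i1 := by
    have hsub : n2 - i1 = j0 := by omega
    rw [hHdef]; simp only []
    rw [if_pos (show i1 ≤ n2 by omega), hsub]
  have hHi1ne : H i1 ≠ 0 := by
    rw [hHi1]; exact mul_ne_zero hi1ne (pow_ne_zero _ hj0ne)
  have hHi1val : ν (H i1) = ν (f.coeff (q ^ i1)) + (q ^ i1 : ℕ) * ν (φ.coeff (q ^ j0)) := by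
    rw [hHi1, hmul _ _ hi1ne (pow_ne_zero _ hj0ne), nu_pow hmul hj0ne]
  -- real identity for the main term
  have hA : ((ν (f.coeff (q ^ i1)) : ℝ) + (q:ℝ) ^ i1 * (ν (φ.coeff (q ^ j0)) : ℝ))
      + (q:ℝ) ^ n2 * z = (ν (f.coeff (q ^ i1)) : ℝ) + (q:ℝ) ^ i1 * w' := by
    rw [hw', hj0val, hn2, pow_add]
    ring
  have hstrict : ∀ i ∈ qIdx q f, i ≠ i1 → H i ≠ 0 → ν (H i1) < ν (H i) := by
    intro i himem hine hHine
    obtain ⟨hile, hfi, hφj⟩ := term_ne_zero hq2 (by rw [hHdef]) hHine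
    set j := n2 - i with hjdef
    have hij : i + j = n2 := by omega
    have hjne : j ≠ j0 := by
      intro hjj
      apply hine
      omega
    have hHival : ν (H i) = ν (f.coeff (q ^ i)) + (q ^ i : ℕ) * ν (φ.coeff (q ^ j)) := by
      rw [hHdef]; simp only []
      rw [if_pos hile, hmul _ _ hfi (pow_ne_zero _ hφj), nu_pow hmul hφj]
    rw [hHi1val, hHival]
    have hreal : ((ν (f.coeff (q ^ i1)) : ℝ) + (q:ℝ) ^ i1 * (ν (φ.coeff (q ^ j0)) : ℝ))
        < (ν (f.coeff (q ^ i)) : ℝ) + (q:ℝ) ^ i * (ν (φ.coeff (q ^ j)) : ℝ) := by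
      have hB : ((ν (f.coeff (q ^ i)) : ℝ) + (q:ℝ) ^ i * (ν (φ.coeff (q ^ j)) : ℝ))
          + (q:ℝ) ^ n2 * z
          = (ν (f.coeff (q ^ i)) : ℝ) + (q:ℝ) ^ i * ((ν (φ.coeff (q ^ j)) : ℝ) + (q:ℝ) ^ j * z) := by
        rw [← hij, pow_add]; ring
      have h1 : w' ≤ (ν (φ.coeff (q ^ j)) : ℝ) + (q:ℝ) ^ j * z := Vpoly_le ν hq2 hφj z
      have h1s : w' < (ν (φ.coeff (q ^ j)) : ℝ) + (q:ℝ) ^ j * z := by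
        refine lt_of_le_of_ne h1 ?_
        rw [hw', hj0val]
        exact (P4 j0 j (fun h => hjne h.symm) hj0ne hφj)
      have h2 : Vpoly q ν f w' ≤ (ν (f.coeff (q ^ i)) : ℝ) + (q:ℝ) ^ i * w' := Vpoly_le ν hq2 hfi w'
      have h3 : Vpoly q ν f w' = (ν (f.coeff (q ^ i1)) : ℝ) + (q:ℝ) ^ i1 * w' := hi1val
      have hq0 : (0:ℝ) < (q:ℝ) ^ i := by positivity
      nlinarith [hA, hB, mul_lt_mul_of_pos_left h1s hq0]
    exact_mod_cast hreal
  have hsum := nu_sum_unique hmul hadd (qIdx q f) H i1 ((mem_qIdx hq2).2 hi1ne) hHi1ne hstrict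
  have hcne : (ψ.comp f).coeff (q ^ n2) ≠ 0 := by rw [← hcomm, hLHS]; exact hsum.1
  have hcval : ν ((ψ.comp f).coeff (q ^ n2)) =
      ν (f.coeff (q ^ i1)) + (q ^ i1 : ℕ) * ν (φ.coeff (q ^ j0)) := by
    rw [← hcomm, hLHS, hsum.2, hHi1val]
  -- RHS analysis
  set G : ℕ → F := fun k => if k ≤ n2 then ψ.coeff (q ^ k) * (f.coeff (q ^ (n2 - k))) ^ q ^ k else 0
    with hGdef
  have hRHS : (ψ.comp f).coeff (q ^ n2) = ∑ k ∈ qIdx q ψ, G k := comp_coeff_q hqps hq2 hψ f n2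
  have hsumne : (∑ k ∈ qIdx q ψ, G k) ≠ 0 := by rw [← hRHS]; exact hcne
  obtain ⟨k1, hk1mem, hGk1ne, hGk1le⟩ := nu_sum_exists hmul hadd (qIdx q ψ) G hsumne
  obtain ⟨hk1le, hψk1, hfl⟩ := term_ne_zero hq2 (by rw [hGdef]) hGk1ne
  set l := n2 - k1 with hldef
  have hkl : k1 + l = n2 := by omega
  have hGk1val : ν (G k1) = ν (ψ.coeff (q ^ k1)) + (q ^ k1 : ℕ) * ν (f.coeff (q ^ l)) := by
    rw [hGdef]; simp only []
    rw [if_pos hk1le, hmul _ _ hψk1 (pow_ne_zero _ hfl), nu_pow hmul hfl]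
  have hGk1leq : ν (G k1) ≤ ν (f.coeff (q ^ i1)) + (q ^ i1 : ℕ) * ν (φ.coeff (q ^ j0)) := by
    rw [← hcval, hRHS]; exact hGk1le
  -- real chain
  have hkey : (ν (ψ.coeff (q ^ k1)) : ℝ) + (q:ℝ) ^ k1 * w < w := by
    have hBr : ((ν (ψ.coeff (q ^ k1)) : ℝ) + (q:ℝ) ^ k1 * (ν (f.coeff (q ^ l)) : ℝ))
        + (q:ℝ) ^ n2 * z
        = (ν (ψ.coeff (q ^ k1)) : ℝ) + (q:ℝ) ^ k1 * ((ν (f.coeff (q ^ l)) : ℝ) + (q:ℝ) ^ l * z) := by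
      rw [← hkl, pow_add]; ring
    have h1 : w ≤ (ν (f.coeff (q ^ l)) : ℝ) + (q:ℝ) ^ l * z := Vpoly_le ν hq2 hfl z
    have h2 : ((ν (ψ.coeff (q ^ k1)) : ℝ) + (q:ℝ) ^ k1 * (ν (f.coeff (q ^ l)) : ℝ))
        ≤ (ν (f.coeff (q ^ i1)) : ℝ) + (q:ℝ) ^ i1 * (ν (φ.coeff (q ^ j0)) : ℝ) := by
      have h2q := hGk1leq
      rw [hGk1val] at h2q
      exact_mod_cast h2q
    -- Vf w' < w
    obtain ⟨i2, hi2ne, hi2val⟩ := Vpoly_mem ν hq2 hf0 hf z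
    have h3 : Vpoly q ν f w' ≤ (ν (f.coeff (q ^ i2)) : ℝ) + (q:ℝ) ^ i2 * w' := Vpoly_le ν hq2 hi2ne w'
    have h4 : (0:ℝ) < (q:ℝ) ^ i2 := by positivity
    have h5 : Vpoly q ν f w' < w := by
      rw [hw, hi2val]
      nlinarith
    have h6 : Vpoly q ν f w' = (ν (f.coeff (q ^ i1)) : ℝ) + (q:ℝ) ^ i1 * w' := hi1val
    have hq0 : (0:ℝ) < (q:ℝ) ^ k1 := by positivity
    nlinarith [hA, hBr, mul_le_mul_of_nonneg_left h1 hq0.le]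
  have hk11 : 1 ≤ k1 := by
    by_contra hc
    push_neg at hc
    interval_cases k1
    · rw [pow_zero] at hψk1 hkey
      rw [hνψ] at hkey
      push_cast at hkey
      simp only [pow_zero, one_mul] at hkey
      linarith
  exact ⟨k1, hk11, hψk1, hkey⟩

end StepB
section Generic
variable {F : Type*} [Field F] {q : ℕ} {ν : F → ℚ}

lemma exists_good (a b : ℝ) (hab : a < b) (Bad : Set ℝ) (hBad : Bad.Finite) :
    ∃ z : ℝ, a < z ∧ z < b ∧ z ∉ Bad := by
  have hinf : (Set.Ioo a b).Infinite := Set.Ioo_infinite hab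
  obtain ⟨z, hz⟩ := (hinf.diff hBad).nonempty
  exact ⟨z, hz.1.1, hz.1.2, hz.2⟩

lemma qpow_ne (hq2 : 2 ≤ q) {j j' : ℕ} (h : j ≠ j') : ((q:ℝ)) ^ j ≠ (q:ℝ) ^ j' := by
  have h1 : (1:ℝ) < (q:ℝ) := by exact_mod_cast (by omega : 1 < q)
  rcases h.lt_or_gt with hlt | hlt
  · exact (pow_lt_pow_right₀ h1 hlt).ne
  · exact (pow_lt_pow_right₀ h1 hlt).ne'

lemma line_bad_subsingleton (hq2 : 2 ≤ q) {c c' : ℝ} {j j' : ℕ} (h : j ≠ j') :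
    {z : ℝ | c + (q:ℝ) ^ j * z = c' + (q:ℝ) ^ j' * z}.Subsingleton := by
  intro z1 h1 z2 h2
  simp only [Set.mem_setOf_eq] at h1 h2
  by_contra hne
  apply qpow_ne hq2 h
  have hz12 : z1 - z2 ≠ 0 := sub_ne_zero.2 hne
  have hmul0 : ((q:ℝ) ^ j - (q:ℝ) ^ j') * (z1 - z2) = 0 := by ring_nf; nlinarith [h1, h2]
  rcases mul_eq_zero.1 hmul0 with h0 | h0
  · linarith [sub_eq_zero.1 h0]
  · exact absurd h0 hz12

lemma vline_bad_subsingleton (hq2 : 2 ≤ q) {f : F[X]} (hf0 : f ≠ 0) (hf : IsqLin q f)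
    {c c' : ℝ} {k k' : ℕ} (h : k ≠ k') :
    {z : ℝ | c + (q:ℝ) ^ k * Vpoly q ν f z = c' + (q:ℝ) ^ k' * Vpoly q ν f z}.Subsingleton := by
  intro z1 h1 z2 h2
  simp only [Set.mem_setOf_eq] at h1 h2
  have hne : (q:ℝ) ^ k - (q:ℝ) ^ k' ≠ 0 := sub_ne_zero.2 (qpow_ne hq2 h)
  have hVeq : Vpoly q ν f z1 = Vpoly q ν f z2 := by
    have e1 : ((q:ℝ) ^ k - (q:ℝ) ^ k') * Vpoly q ν f z1 = c' - c := by linarith [h1]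
    have e2 : ((q:ℝ) ^ k - (q:ℝ) ^ k') * Vpoly q ν f z2 = c' - c := by linarith [h2]
    exact mul_left_cancel₀ hne (e1.trans e2.symm)
  rcases lt_trichotomy z1 z2 with hlt | heq | hlt
  · exact absurd hVeq (Vpoly_strictMono hq2 hf0 hf hlt).ne
  · exact heq
  · exact absurd hVeq (Vpoly_strictMono hq2 hf0 hf hlt).ne'

end Generic
end Aux

theorem stmt5 {Fq F : Type*} [Field Fq] [Fintype Fq] [Field F] [Algebra Fq F]
    (q : ℕ) (hq : q = Fintype.card Fq)
    (ν : F → ℚ)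
    (hmul : ∀ x y : F, x ≠ 0 → y ≠ 0 → ν (x * y) = ν x + ν y)
    (hadd : ∀ x y : F, x ≠ 0 → y ≠ 0 → x + y ≠ 0 → min (ν x) (ν y) ≤ ν (x + y))
    (φ ψ : Polynomial F) (hφ : IsqLin q φ) (hψ : IsqLin q ψ)
    (hdφ : 1 < φ.natDegree) (hdψ : 1 < ψ.natDegree)
    (hφ0 : φ.coeff 1 ≠ 0) (hψ0 : ψ.coeff 1 ≠ 0)
    (hνφ : ν (φ.coeff 1) = 0) (hνψ : ν (ψ.coeff 1) = 0)
    (f : Polynomial F) (hf : IsqLin q f) (hf0 : f ≠ 0)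
    (hcomm : f.comp φ = ψ.comp f) :
    lamNu q ν ψ = Vpoly q ν f (lamNu q ν φ) := by
  classical
  have hq2 : 2 ≤ q := by rw [hq]; exact Fintype.one_lt_card
  -- characteristic setup
  set pp := ringChar Fq with hpp
  haveI hpf : Fact pp.Prime := ⟨CharP.char_is_prime Fq pp⟩
  obtain ⟨n, hppp, hcard⟩ := FiniteField.card Fq pp
  haveI : CharP F pp := charP_of_injective_ringHom (algebraMap Fq F).injective pp
  have hqps : q = pp ^ (n : ℕ) := by rw [hq, hcard]
  set lam := lamNu q ν φ with hlam
  set μ := Vpoly q ν f lam with hμ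
  have hQf : (0:ℝ) < (q:ℝ) ^ f.natDegree := by positivity
  have hQψ : (0:ℝ) < (q:ℝ) ^ ψ.natDegree := by positivity
  -- bad set for the right-side genericity (ψ-lines at V_f z)
  set BadA : Set ℝ := ⋃ pr ∈ (((qIdx q ψ) ×ˢ (qIdx q ψ)).filter fun pr : ℕ × ℕ => pr.1 ≠ pr.2),
      {z : ℝ | (ν (ψ.coeff (q ^ pr.1)) : ℝ) + (q:ℝ) ^ pr.1 * Vpoly q ν f z
             = (ν (ψ.coeff (q ^ pr.2)) : ℝ) + (q:ℝ) ^ pr.2 * Vpoly q ν f z} with hBadAdef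
  have hBadA : BadA.Finite := by
    apply Set.Finite.biUnion (Finset.finite_toSet _)
    intro pr hpr
    have hne : pr.1 ≠ pr.2 := (Finset.mem_filter.1 (Finset.mem_coe.1 hpr)).2
    exact (vline_bad_subsingleton hq2 hf0 hf hne).finite
  -- bad set for the left-side genericity (φ-lines at z)
  set BadB : Set ℝ := ⋃ pr ∈ (((qIdx q φ) ×ˢ (qIdx q φ)).filter fun pr : ℕ × ℕ => pr.1 ≠ pr.2),
      {z : ℝ | (ν (φ.coeff (q ^ pr.1)) : ℝ) + (q:ℝ) ^ pr.1 * z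
             = (ν (φ.coeff (q ^ pr.2)) : ℝ) + (q:ℝ) ^ pr.2 * z} with hBadBdef
  have hBadB : BadB.Finite := by
    apply Set.Finite.biUnion (Finset.finite_toSet _)
    intro pr hpr
    have hne : pr.1 ≠ pr.2 := (Finset.mem_filter.1 (Finset.mem_coe.1 hpr)).2
    exact (line_bad_subsingleton hq2 hne).finite
  -- G1
  have G1 : ∀ k, 1 ≤ k → ψ.coeff (q ^ k) ≠ 0 →
      μ ≤ (ν (ψ.coeff (q ^ k)) : ℝ) + (q:ℝ) ^ k * μ := by
    intro k hk1 hkne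
    by_contra hcon
    push_neg at hcon
    set ε := μ - ((ν (ψ.coeff (q ^ k)) : ℝ) + (q:ℝ) ^ k * μ) with hε
    have hεpos : 0 < ε := by rw [hε]; linarith
    have hqk : (0:ℝ) < (q:ℝ) ^ k := by positivity
    set δ := ε / ((q:ℝ) ^ k * (q:ℝ) ^ f.natDegree) with hδ
    have hδpos : 0 < δ := by rw [hδ]; positivity
    obtain ⟨z, hz1, hz2, hz3⟩ := exists_good lam (lam + δ) (by linarith) BadA hBadA
    have P3 : ∀ a b, a ≠ b → ψ.coeff (q ^ a) ≠ 0 → ψ.coeff (q ^ b) ≠ 0 →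
        (ν (ψ.coeff (q ^ a)) : ℝ) + (q:ℝ) ^ a * Vpoly q ν f z ≠
        (ν (ψ.coeff (q ^ b)) : ℝ) + (q:ℝ) ^ b * Vpoly q ν f z := by
      intro a b hab ha hb heq
      apply hz3
      rw [hBadAdef]
      refine Set.mem_biUnion (x := ((a, b) : ℕ × ℕ)) ?_ ?_
      · exact_mod_cast Finset.mem_filter.2 ⟨Finset.mem_product.2
          ⟨(mem_qIdx hq2).2 ha, (mem_qIdx hq2).2 hb⟩, hab⟩
      · exact heq
    have hA1 := stepA hmul hadd hqps hq2 hφ hψ hf hψ0 hf0 hνφ hcomm (le_of_lt hz1) P3 k hkne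
    have hm1 : μ ≤ Vpoly q ν f z := by
      rw [hμ]; exact (Vpoly_strictMono hq2 hf0 hf hz1).le
    have hm2 : Vpoly q ν f z ≤ μ + (q:ℝ) ^ f.natDegree * (z - lam) := by
      rw [hμ]; exact Vpoly_lip hq2 hf0 hf (le_of_lt hz1)
    have hzδ : z - lam < δ := by linarith
    have hδε : (q:ℝ) ^ k * ((q:ℝ) ^ f.natDegree * δ) = ε := by
      rw [hδ]; field_simp
    have hm2' : (q:ℝ) ^ k * Vpoly q ν f z
        ≤ (q:ℝ) ^ k * μ + (q:ℝ) ^ k * ((q:ℝ) ^ f.natDegree * (z - lam)) := by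
      nlinarith [mul_le_mul_of_nonneg_left hm2 hqk.le]
    have hxx : (q:ℝ) ^ k * ((q:ℝ) ^ f.natDegree * (z - lam)) < ε :=
      lt_of_lt_of_eq (mul_lt_mul_of_pos_left (mul_lt_mul_of_pos_left hzδ hQf) hqk) hδε
    linarith [hA1, hm1, hm2', hxx]
  -- G2
  have G2 : ∃ k, 1 ≤ k ∧ ψ.coeff (q ^ k) ≠ 0 ∧
      (ν (ψ.coeff (q ^ k)) : ℝ) + (q:ℝ) ^ k * μ ≤ μ := by
    set K1 := (qIdx q ψ).filter (1 ≤ ·) with hK1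
    have hK1ne : K1.Nonempty := by
      obtain ⟨i, hi1, hine⟩ := Lfin_nonempty hq2 hψ hdψ
      exact ⟨i, Finset.mem_filter.2 ⟨(mem_qIdx hq2).2 hine, hi1⟩⟩
    set gfun : ℕ → ℝ := fun k => (ν (ψ.coeff (q ^ k)) : ℝ) + (q:ℝ) ^ k * μ - μ with hgfun
    set T := K1.image gfun with hT
    have hTne : T.Nonempty := hK1ne.image _
    set m := T.min' hTne with hm
    have hmle : m ≤ 0 := by
      by_contra hm0
      push_neg at hm0
      set δ := m / ((q:ℝ) ^ ψ.natDegree * (q:ℝ) ^ f.natDegree) with hδ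
      have hδpos : 0 < δ := by rw [hδ]; positivity
      obtain ⟨z, hz1, hz2, hz3⟩ := exists_good (lam - δ) lam (by linarith) BadB hBadB
      have P4 : ∀ a b, a ≠ b → φ.coeff (q ^ a) ≠ 0 → φ.coeff (q ^ b) ≠ 0 →
          (ν (φ.coeff (q ^ a)) : ℝ) + (q:ℝ) ^ a * z ≠
          (ν (φ.coeff (q ^ b)) : ℝ) + (q:ℝ) ^ b * z := by
        intro a b hab ha hb heq
        apply hz3
        rw [hBadBdef]
        refine Set.mem_biUnion (x := ((a, b) : ℕ × ℕ)) ?_ ?_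
        · exact_mod_cast Finset.mem_filter.2 ⟨Finset.mem_product.2
            ⟨(mem_qIdx hq2).2 ha, (mem_qIdx hq2).2 hb⟩, hab⟩
        · exact heq
      obtain ⟨k, hk1, hkne, hklt⟩ := stepB hmul hadd hqps hq2 hφ hψ hf hφ0 hf0 hdφ
        hνφ hνψ hcomm hz2 P4
      have hkmem : k ∈ K1 := Finset.mem_filter.2 ⟨(mem_qIdx hq2).2 hkne, hk1⟩
      have hmlegk : m ≤ gfun k := Finset.min'_le _ _ (Finset.mem_image_of_mem _ hkmem)
      have hqk : (0:ℝ) < (q:ℝ) ^ k := by positivity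
      have hqkD : (q:ℝ) ^ k ≤ (q:ℝ) ^ ψ.natDegree := by
        apply pow_le_pow_right₀ (by exact_mod_cast (by omega : 1 ≤ q))
        exact idx_le hq2 hkne
      have hb1 : Vpoly q ν f z ≤ μ := by
        rw [hμ]; exact (Vpoly_strictMono hq2 hf0 hf hz2).le
      have hb2 : μ ≤ Vpoly q ν f z + (q:ℝ) ^ f.natDegree * (lam - z) := by
        rw [hμ]; exact Vpoly_lip hq2 hf0 hf (le_of_lt hz2)
      have hzδ : lam - z < δ := by linarith
      have hδm : (q:ℝ) ^ ψ.natDegree * ((q:ℝ) ^ f.natDegree * δ) = m := by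
        rw [hδ]; field_simp
      -- gfun k < m yet m ≤ gfun k
      have hglt : gfun k < m := by
        have e1 : (ν (ψ.coeff (q ^ k)) : ℝ) + (q:ℝ) ^ k * μ
            ≤ (ν (ψ.coeff (q ^ k)) : ℝ) + (q:ℝ) ^ k * Vpoly q ν f z
              + (q:ℝ) ^ k * ((q:ℝ) ^ f.natDegree * (lam - z)) := by
          nlinarith [mul_le_mul_of_nonneg_left hb2 hqk.le]
        have h0 : 0 ≤ (q:ℝ) ^ f.natDegree * (lam - z) := by
          have : 0 ≤ lam - z := by linarith
          positivity
        have e2a : (q:ℝ) ^ k * ((q:ℝ) ^ f.natDegree * (lam - z))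
            ≤ (q:ℝ) ^ ψ.natDegree * ((q:ℝ) ^ f.natDegree * (lam - z)) :=
          mul_le_mul_of_nonneg_right hqkD h0
        have e2b : (q:ℝ) ^ ψ.natDegree * ((q:ℝ) ^ f.natDegree * (lam - z))
            < (q:ℝ) ^ ψ.natDegree * ((q:ℝ) ^ f.natDegree * δ) :=
          mul_lt_mul_of_pos_left (mul_lt_mul_of_pos_left hzδ hQf) hQψ
        have hgkval : gfun k = (ν (ψ.coeff (q ^ k)) : ℝ) + (q:ℝ) ^ k * μ - μ := rfl
        rw [hgkval]
        linarith [hklt, hb1, e1, e2a, e2b, hδm]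
      linarith
    obtain ⟨k, hkmem, hgk⟩ := Finset.mem_image.1 (T.min'_mem hTne)
    rw [Finset.mem_filter] at hkmem
    refine ⟨k, hkmem.2, (mem_qIdx hq2).1 hkmem.1, ?_⟩
    have : gfun k ≤ 0 := by rw [hgk]; exact hmle
    rw [hgfun] at this
    simp only [] at this
    linarith
  exact lamNu_eq hq2 hνψ μ G1 G2
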